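/- Let f: A → B be a ring homomorphism. Then f is a ring epimorphism if and only if: (1) for all finitely generated right B-modules M, N, Hom_A(M,N) = Hom_B(M,N), and (2) for any right B-module L and any A-linear map ψ: B → L, the image of ψ is contained in a finitely generated B-submodule of L. -/

import Mathlib

universe u

open MulOpposite

section aux

variable {B : Type u} [Ring B] {M N : Type u} [AddCommGroup M] [AddCommGroup N]
  [Module Bᵐᵒᵖ M] [Module Bᵐᵒᵖ N]

/-- The `g`-twisted action of `b` on `M × N`. -/
def twistFun (g : M →+ N) (b : B) : M × N →+ M × N :=
  AddMonoidHom.mk' (fun p => (op b • p.1, op b • p.2 + g (op b • p.1) - op b • g p.1))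
    (by
      intro p q
      ext
      · simp [smul_add]
      · simp [smul_add, map_add]
        abel)

@[simp] lemma twistFun_apply (g : M →+ N) (b : B) (p : M × N) :
    twistFun g b p = (op b • p.1, op b • p.2 + g (op b • p.1) - op b • g p.1) := rfl

/-- The `g`-twisted ring hom `B →+* (End (M × N))ᵐᵒᵖ`. -/
def twistHom (g : M →+ N) : B →+* (AddMonoid.End (M × N))ᵐᵒᵖ where
  toFun b := op (twistFun g b)
  map_one' := by
    apply congrArg op
    refine AddMonoidHom.ext fun p => ?_
    show twistFun g 1 p = p
    ext
    · simp
    · simp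
  map_mul' x y := by
    show op (twistFun g (x * y)) = op (@HMul.hMul (AddMonoid.End (M × N)) (AddMonoid.End (M × N)) _ _ (twistFun g y) (twistFun g x))
    apply congrArg op
    refine AddMonoidHom.ext fun p => ?_
    show twistFun g (x * y) p = twistFun g y (twistFun g x p)
    ext
    · simp [mul_smul]
    · simp [mul_smul, smul_add, smul_sub]
      abel
  map_zero' := by
    apply congrArg op
    refine AddMonoidHom.ext fun p => ?_
    show twistFun g 0 p = 0
    ext
    · simp
    · simp
  map_add' x y := by
    have : (op (twistFun g x) + op (twistFun g y) : (AddMonoid.End (M × N))ᵐᵒᵖ)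
        = op (twistFun g x + twistFun g y) := rfl
    show op (twistFun g (x + y)) = op (twistFun g x + twistFun g y)
    apply congrArg op
    refine AddMonoidHom.ext fun p => ?_
    show twistFun g (x + y) p = twistFun g x p + twistFun g y p
    ext
    · simp [add_smul]
    · simp [add_smul, map_add]
      abel

lemma epi_full {A : Type u} [Ring A] (f : A →+* B)
    (h : ∀ ⦃T : Type u⦄ [Ring T], ∀ g₁ g₂ : B →+* T, g₁.comp f = g₂.comp f → g₁ = g₂)
    (g : M →+ N)
    (hg : ∀ (a : A) (m : M), g ((op (f a) : Bᵐᵒᵖ) • m) = (op (f a) : Bᵐᵒᵖ) • g m) :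
    ∀ (b : B) (m : M), g ((op b : Bᵐᵒᵖ) • m) = (op b : Bᵐᵒᵖ) • g m := by
  have key : twistHom (B := B) g = twistHom (B := B) (0 : M →+ N) := by
    apply h
    ext a
    show op (twistFun g (f a)) = op (twistFun (0 : M →+ N) (f a))
    apply congrArg op
    refine AddMonoidHom.ext fun p => ?_
    ext
    · rfl
    · simp [hg]
  intro b m
  have h2 : twistFun g b (m, 0) = twistFun (0 : M →+ N) b (m, 0) := by
    have := congrArg (fun φ : B →+* (AddMonoid.End (M × N))ᵐᵒᵖ => (unop (φ b)) (m, 0)) key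
    exact this
  have h3 := congrArg Prod.snd h2
  simpa [sub_eq_zero] using h3

end aux

/-- `f : A → B` is an epimorphism in the category of rings. -/
def IsRingEpi {A B : Type u} [Ring A] [Ring B] (f : A →+* B) : Prop :=
  ∀ ⦃T : Type u⦄ [Ring T], ∀ g₁ g₂ : B →+* T, g₁.comp f = g₂.comp f → g₁ = g₂

/-- `f : A → B` is a ring epimorphism iff (1) for all finitely generated right
`B`-modules `M`, `N`, every `A`-linear map `M → N` (`A` acting via `f`) is `B`-linear, and
(2) for every right `B`-module `L` and every `A`-linear map `ψ : B → L`, the image of `ψ` is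
contained in a finitely generated `B`-submodule of `L`. -/
theorem stmt5 {A B : Type u} [Ring A] [Ring B] (f : A →+* B) :
    IsRingEpi f ↔
      ((∀ (M N : Type u) [AddCommGroup M] [AddCommGroup N] [Module Bᵐᵒᵖ M] [Module Bᵐᵒᵖ N],
          Module.Finite Bᵐᵒᵖ M → Module.Finite Bᵐᵒᵖ N →
            ∀ g : M →+ N, (∀ (a : A) (m : M), g (op (f a) • m) = op (f a) • g m) →
              ∀ (b : B) (m : M), g (op b • m) = op b • g m) ∧
       (∀ (L : Type u) [AddCommGroup L] [Module Bᵐᵒᵖ L],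
          ∀ ψ : B →+ L, (∀ (a : A) (b : B), ψ (b * f a) = op (f a) • ψ b) →
            ∃ P : Submodule Bᵐᵒᵖ L, P.FG ∧ ∀ b : B, ψ b ∈ P)) := by
  constructor
  · intro h
    constructor
    · intro M N _ _ _ _ _ _ g hg
      exact epi_full f h g hg
    · intro L _ _ ψ hψ
      have hlin : ∀ (b : B) (b' : B), ψ ((op b : Bᵐᵒᵖ) • b') = (op b : Bᵐᵒᵖ) • ψ b' := by
        refine epi_full (M := B) (N := L) f h ψ ?_
        intro a b
        rw [op_smul_eq_mul]
        exact hψ a b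
      refine ⟨Submodule.span Bᵐᵒᵖ {ψ 1}, Submodule.fg_span_singleton _, fun b => ?_⟩
      have : ψ b = (op b : Bᵐᵒᵖ) • ψ 1 := by
        have := hlin b 1
        rwa [op_smul_eq_mul, one_mul] at this
      rw [this]
      exact Submodule.smul_mem _ _ (Submodule.mem_span_singleton_self _)
  · rintro ⟨h1, h2⟩ T _ g₁ g₂ hfg
    have hf : ∀ a : A, g₁ (f a) = g₂ (f a) := fun a => RingHom.congr_fun hfg a
    letI : Module Bᵐᵒᵖ T := Module.compHom T (RingHom.op g₂)
    have smul_def : ∀ (b : B) (t : T), (op b : Bᵐᵒᵖ) • t = t * g₂ b := fun b t => rfl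
    set ψ : B →+ T := AddMonoidHom.mk' (fun b => g₁ b - g₂ b)
      (by intro x y; simp [map_add]; abel) with hψdef
    have hψA : ∀ (a : A) (b : B), ψ (b * f a) = (op (f a) : Bᵐᵒᵖ) • ψ b := by
      intro a b
      simp only [hψdef, AddMonoidHom.mk'_apply, map_mul, smul_def, hf a, sub_mul]
    obtain ⟨P, hPfg, hPmem⟩ := h2 T ψ hψA
    set Q : Submodule Bᵐᵒᵖ T := P ⊔ Submodule.span Bᵐᵒᵖ {(1 : T)} with hQdef
    have hQfg : Q.FG := Submodule.FG.sup hPfg (Submodule.fg_span_singleton _)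
    haveI hQfin : Module.Finite Bᵐᵒᵖ Q := Module.Finite.iff_fg.mpr hQfg
    haveI hBfin : Module.Finite Bᵐᵒᵖ B := by
      refine Module.finite_def.mpr ⟨{1}, ?_⟩
      rw [Finset.coe_singleton, Submodule.eq_top_iff']
      intro x
      refine Submodule.mem_span_singleton.mpr ⟨op x, ?_⟩
      simp [op_smul_eq_mul]
    have hmem : ∀ b : B, g₁ b ∈ Q := by
      intro b
      have e1 : g₁ b = ψ b + (op b : Bᵐᵒᵖ) • (1 : T) := by
        simp [hψdef, smul_def]
      rw [e1]
      exact Q.add_mem (Submodule.mem_sup_left (hPmem b))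
        (Q.smul_mem _ (Submodule.mem_sup_right (Submodule.mem_span_singleton_self _)))
    set g : B →+ Q := AddMonoidHom.mk' (fun b => ⟨g₁ b, hmem b⟩)
      (by intro x y; ext; simp [map_add]) with hgdef
    have hgA : ∀ (a : A) (b : B), g ((op (f a) : Bᵐᵒᵖ) • b) = (op (f a) : Bᵐᵒᵖ) • g b := by
      intro a b
      ext
      show g₁ (op (f a) • b) = ((op (f a) : Bᵐᵒᵖ) • (⟨g₁ b, hmem b⟩ : Q) : Q).1
      rw [op_smul_eq_mul, map_mul, hf a]
      rfl
    have hB := h1 B Q inferInstance inferInstance g hgA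
    have key : ∀ b : B, g₁ b = g₂ b := by
      intro b
      have := hB b 1
      rw [op_smul_eq_mul, one_mul] at this
      have := congrArg Subtype.val this
      simp only [hgdef, AddMonoidHom.mk'_apply] at this
      calc g₁ b = g₁ b := rfl
        _ = g₂ b := by
            have h5 : g₁ b = ((op b : Bᵐᵒᵖ) • (⟨g₁ 1, hmem 1⟩ : Q) : Q).1 := this
            rw [h5]
            show g₁ 1 * g₂ b = g₂ b
            simp
    exact RingHom.ext key
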